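/- Let d be a positive integer, let e ∈ ℤ^d, and let p be a polynomial in d variables with rational coefficients. Then the formal power series ∑_{k ∈ ℕ^d} p(k) C_{k+e} t^{|k|} ∈ ℚ[[t]] is a rational function of t with poles only at t = 1/a for integers 1 ≤ a ≤ d; that is, there exist non-negative integers m_1, …, m_d such that (∏_{a=1}^{d} (1 − a t)^{m_a}) · ∑_{k ∈ ℕ^d} p(k) C_{k+e} t^{|k|} is a polynomial in ℚ[t]. -/

import Mathlib

/-- The multinomial coefficient `C_k = (k_1 + ⋯ + k_d)!/(k_1! ⋯ k_d!)` for an integer vector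
`k ∈ ℤ^d`, with the convention `C_k = 0` if some coordinate of `k` is negative. -/
noncomputable def intMultinomial {d : ℕ} (k : Fin d → ℤ) : ℕ :=
  if ∀ i, 0 ≤ k i then Nat.multinomial Finset.univ (fun i => (k i).toNat) else 0



noncomputable section AuxMGSR

/-- Denominator polynomial: product of pole factors. -/
def niceDen (D : ℕ) (m : ℕ → ℕ) : Polynomial ℚ :=
  ∏ a ∈ Finset.range D, (1 - Polynomial.C ((a + 1 : ℕ) : ℚ) * Polynomial.X) ^ (m a)

/-- A power series is "nice at level D" if multiplying by suitable powers of
`(1 - a t)` for `1 ≤ a ≤ D` yields a polynomial. -/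
def Nice (D : ℕ) (F : PowerSeries ℚ) : Prop :=
  ∃ (m : ℕ → ℕ) (P : Polynomial ℚ), (niceDen D m : PowerSeries ℚ) * F = (P : PowerSeries ℚ)

lemma niceDen_zero (D : ℕ) : niceDen D (fun _ => 0) = 1 := by
  simp [niceDen]

lemma niceDen_add (D : ℕ) (m₁ m₂ : ℕ → ℕ) :
    niceDen D (m₁ + m₂) = niceDen D m₁ * niceDen D m₂ := by
  simp [niceDen, pow_add, Finset.prod_mul_distrib]

lemma nice_poly (D : ℕ) (P : Polynomial ℚ) : Nice D (P : PowerSeries ℚ) :=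
  ⟨fun _ => 0, P, by rw [niceDen_zero]; simp⟩

lemma nice_zero (D : ℕ) : Nice D 0 := by
  simpa using nice_poly D 0

lemma nice_polymul {D : ℕ} {F : PowerSeries ℚ} (Q : Polynomial ℚ) (h : Nice D F) :
    Nice D ((Q : PowerSeries ℚ) * F) := by
  obtain ⟨m, P, hP⟩ := h
  exact ⟨m, Q * P, by push_cast; rw [mul_left_comm, hP]⟩

lemma nice_add {D : ℕ} {F G : PowerSeries ℚ} (hF : Nice D F) (hG : Nice D G) :
    Nice D (F + G) := by
  obtain ⟨m₁, P₁, hP₁⟩ := hF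
  obtain ⟨m₂, P₂, hP₂⟩ := hG
  refine ⟨m₁ + m₂, niceDen D m₂ * P₁ + niceDen D m₁ * P₂, ?_⟩
  rw [niceDen_add]
  push_cast
  rw [mul_add]
  rw [show ((niceDen D m₁ : PowerSeries ℚ) * niceDen D m₂) * F
      = (niceDen D m₂ : PowerSeries ℚ) * ((niceDen D m₁ : PowerSeries ℚ) * F) by ring, hP₁]
  rw [show ((niceDen D m₁ : PowerSeries ℚ) * niceDen D m₂) * G
      = (niceDen D m₁ : PowerSeries ℚ) * ((niceDen D m₂ : PowerSeries ℚ) * G) by ring, hP₂]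

lemma nice_sum {D : ℕ} {ι : Type*} (s : Finset ι) (f : ι → PowerSeries ℚ)
    (h : ∀ i ∈ s, Nice D (f i)) : Nice D (∑ i ∈ s, f i) := by
  classical
  induction s using Finset.induction_on with
  | empty => simpa using nice_zero D
  | insert _ _ hx ih =>
    rw [Finset.sum_insert hx]
    exact nice_add (h _ (Finset.mem_insert_self _ _))
      (ih fun i hi => h i (Finset.mem_insert_of_mem hi))

lemma nice_mono {D D' : ℕ} (hD : D ≤ D') {F : PowerSeries ℚ} (h : Nice D F) : Nice D' F := by
  obtain ⟨m, P, hP⟩ := h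
  refine ⟨fun a => if a < D then m a else 0, P, ?_⟩
  have : niceDen D' (fun a => if a < D then m a else 0) = niceDen D m := by
    unfold niceDen
    rw [← Finset.prod_subset (Finset.range_subset_range.2 hD)
      (fun x _ hx => by
        have : ¬ x < D := by simpa using hx
        simp [this])]
    exact Finset.prod_congr rfl fun x hx => by
      have : x < D := by simpa using hx
      simp [this]
  rw [this, hP]

lemma nice_unfactor {D a : ℕ} (ha : a < D) {F : PowerSeries ℚ}
    (h : Nice D (((1 - Polynomial.C ((a + 1 : ℕ) : ℚ) * Polynomial.X : Polynomial ℚ) :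
      PowerSeries ℚ) * F)) : Nice D F := by
  classical
  obtain ⟨m, P, hP⟩ := h
  set f : Polynomial ℚ := (1 - Polynomial.C ((a + 1 : ℕ) : ℚ) * Polynomial.X) with hf
  refine ⟨Function.update m a (m a + 1), P, ?_⟩
  have hmem : a ∈ Finset.range D := Finset.mem_range.2 ha
  have key : niceDen D (Function.update m a (m a + 1)) = f * niceDen D m := by
    unfold niceDen
    rw [← Finset.mul_prod_erase _ _ hmem, ← Finset.mul_prod_erase _ _ hmem]
    rw [Function.update_self, pow_succ, Finset.prod_congr rfl
      (fun x hx => by rw [Function.update_of_ne (Finset.ne_of_mem_erase hx)])]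
    ring
  rw [key, Polynomial.coe_mul,
    show ((f : PowerSeries ℚ) * (niceDen D m : PowerSeries ℚ)) * F
      = (niceDen D m : PowerSeries ℚ) * ((f : PowerSeries ℚ) * F) from by ring, hP]

lemma nice_finite_support {D N : ℕ} {F : PowerSeries ℚ}
    (h : ∀ n, N ≤ n → PowerSeries.coeff n F = 0) : Nice D F := by
  have : ((PowerSeries.trunc N F : Polynomial ℚ) : PowerSeries ℚ) = F := by
    ext n
    rw [Polynomial.coeff_coe, PowerSeries.coeff_trunc]
    split
    · rfl
    · exact (h n (by omega)).symm
  rw [← this]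
  exact nice_poly D _

lemma mk_n_mul_eq (F : PowerSeries ℚ) :
    PowerSeries.mk (fun n => (n : ℚ) * PowerSeries.coeff n F)
      = PowerSeries.X * PowerSeries.derivativeFun F := by
  ext n
  cases n with
  | zero => simp
  | succ n =>
    rw [PowerSeries.coeff_succ_X_mul, PowerSeries.coeff_mk,
      show PowerSeries.coeff n F.derivativeFun = PowerSeries.coeff (n + 1) F * (n + 1) from
        PowerSeries.coeff_derivative F n]
    push_cast
    ring

lemma nice_mul_n {D : ℕ} {F : PowerSeries ℚ} (h : Nice D F) :
    Nice D (PowerSeries.mk fun n => (n : ℚ) * PowerSeries.coeff n F) := by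
  obtain ⟨m, P, hP⟩ := h
  rw [mk_n_mul_eq]
  have key : (niceDen D m : PowerSeries ℚ) * PowerSeries.derivativeFun F
      = (P.derivative : PowerSeries ℚ)
        - F * ((niceDen D m).derivative : PowerSeries ℚ) := by
    have h1 := PowerSeries.derivativeFun_mul ((niceDen D m : Polynomial ℚ) : PowerSeries ℚ) F
    have hd : ∀ f : Polynomial ℚ, (f : PowerSeries ℚ).derivativeFun = Polynomial.derivative f :=
      fun f => PowerSeries.derivative_coe f
    rw [hP, hd, hd,
      smul_eq_mul, smul_eq_mul] at h1
    linear_combination -h1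
  refine ⟨m + m, Polynomial.X * (niceDen D m * P.derivative - P * (niceDen D m).derivative), ?_⟩
  rw [niceDen_add]
  push_cast [Polynomial.coe_X]
  linear_combination (PowerSeries.X : PowerSeries ℚ) * ((niceDen D m : Polynomial ℚ) : PowerSeries ℚ) * key
    - (PowerSeries.X : PowerSeries ℚ) * (((niceDen D m).derivative : Polynomial ℚ) : PowerSeries ℚ) * hP

lemma nice_mul_poly {D : ℕ} (q : Polynomial ℚ) {F : PowerSeries ℚ} (h : Nice D F) :
    Nice D (PowerSeries.mk fun n => q.eval (n : ℚ) * PowerSeries.coeff n F) := by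
  induction q using Polynomial.induction_on with
  | C a =>
    have e : (PowerSeries.mk fun n => (Polynomial.C a).eval (n:ℚ) * PowerSeries.coeff n F)
        = ((Polynomial.C a : Polynomial ℚ) : PowerSeries ℚ) * F := by
      ext n; simp [Polynomial.coe_C, PowerSeries.coeff_C_mul]
    rw [e]; exact nice_polymul _ h
  | add p q hp hq =>
    have e : (PowerSeries.mk fun n => ((p+q).eval (n:ℚ)) * PowerSeries.coeff n F)
        = (PowerSeries.mk fun n => p.eval (n:ℚ) * PowerSeries.coeff n F)
          + (PowerSeries.mk fun n => q.eval (n:ℚ) * PowerSeries.coeff n F) := by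
      ext n; simp [add_mul]
    rw [e]; exact nice_add hp hq
  | monomial k a ih =>
    have e : (PowerSeries.mk fun n =>
          ((Polynomial.C a * Polynomial.X ^ (k+1)).eval (n:ℚ)) * PowerSeries.coeff n F)
        = (PowerSeries.mk fun n => (n:ℚ) * PowerSeries.coeff n
            (PowerSeries.mk fun n =>
              ((Polynomial.C a * Polynomial.X ^ k).eval (n:ℚ)) * PowerSeries.coeff n F)) := by
      ext n; simp; ring
    rw [e]; exact nice_mul_n ih

end AuxMGSR

noncomputable section
lemma intMultinomial_neg {d : ℕ} {v : Fin d → ℤ} (i : Fin d) (h : v i < 0) :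
    intMultinomial v = 0 := by
  rw [intMultinomial, if_neg]
  push_neg
  exact ⟨i, h⟩

lemma intMultinomial_of_nonneg {d : ℕ} {v : Fin d → ℤ} (h : ∀ i, 0 ≤ v i) :
    intMultinomial v = Nat.multinomial Finset.univ (fun i => (v i).toNat) := if_pos h

lemma intMultinomial_sum_neg {d : ℕ} {v : Fin d → ℤ} (h : ∑ i, v i < 0) :
    intMultinomial v = 0 := by
  rw [intMultinomial, if_neg]
  intro hc
  exact absurd (Finset.sum_nonneg fun i _ => hc i) (not_le.2 h)

lemma nat_multinomial_congr {α : Type*} {s : Finset α} {f g : α → ℕ}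
    (h : ∀ i ∈ s, f i = g i) : Nat.multinomial s f = Nat.multinomial s g := by
  unfold Nat.multinomial
  rw [Finset.sum_congr rfl h, Finset.prod_congr rfl (fun i hi => by rw [h i hi])]

/-- over `ℚ`: `multinomial f = (∑ f)! / ∏ (f i)!` -/
lemma multinomial_cast_eq {α : Type*} (s : Finset α) (f : α → ℕ) :
    (Nat.multinomial s f : ℚ) * ∏ i ∈ s, ((f i).factorial : ℚ) = ((∑ i ∈ s, f i).factorial : ℚ) := by
  rw [mul_comm, ← Nat.cast_prod, ← Nat.cast_mul, Nat.multinomial_spec]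

end

noncomputable section
lemma intMultinomial_pascal {d : ℕ} {v : Fin d → ℤ} (hv : ∑ i, v i ≠ 0) :
    (intMultinomial v : ℚ)
      = ∑ i, (intMultinomial (fun j => v j - if j = i then 1 else 0) : ℚ) := by
  by_cases hpos : ∀ i, 0 ≤ v i
  · set f : Fin d → ℕ := fun i => (v i).toNat with hf
    have hvf : ∀ i, v i = (f i : ℤ) := fun i => (Int.toNat_of_nonneg (hpos i)).symm
    have hsum : ∑ i, v i = ((∑ i, f i : ℕ) : ℤ) := by
      push_cast; exact Finset.sum_congr rfl fun i _ => hvf i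
    set s : ℕ := ∑ i, f i with hs
    have hs1 : 1 ≤ s := by
      rcases Nat.eq_zero_or_pos s with h0 | h
      · exact absurd (by rw [hsum, h0]; rfl) hv
      · exact h
    obtain ⟨t, ht⟩ : ∃ t, s = t + 1 := ⟨s - 1, by omega⟩
    have hprodne : (∏ j, ((f j).factorial : ℚ)) ≠ 0 :=
      Finset.prod_ne_zero_iff.2 fun j _ => Nat.cast_ne_zero.2 (Nat.factorial_ne_zero _)
    have claim : ∀ i, (intMultinomial (fun j => v j - if j = i then 1 else 0) : ℚ)
        * ∏ j, ((f j).factorial : ℚ) = (f i : ℚ) * (t.factorial : ℚ) := by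
      intro i
      by_cases hfi : f i = 0
      · rw [intMultinomial_neg i (by rw [hvf i, hfi, if_pos rfl]; norm_num)]
        rw [hfi]
        simp
      · obtain ⟨c, hc⟩ : ∃ c, f i = c + 1 := ⟨f i - 1, by omega⟩
        have hwpos : ∀ j, 0 ≤ v j - if j = i then 1 else 0 := by
          intro j
          by_cases hj : j = i
          · subst hj; rw [if_pos rfl, hvf j, hc]; push_cast; omega
          · rw [if_neg hj]; simpa using hpos j
        rw [intMultinomial_of_nonneg hwpos]
        have hg : (fun j => (v j - if j = i then 1 else 0).toNat) = Function.update f i c := by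
          funext j
          by_cases hj : j = i
          · subst hj; rw [Function.update_self, if_pos rfl, hvf j, hc]
            push_cast; omega
          · rw [Function.update_of_ne hj, if_neg hj, hvf j]
            push_cast; omega
        rw [hg]
        set g := Function.update f i c with hgdef
        have hgsum : ∑ j, g j = t := by
          have h1 : ∑ j, g j = c + ∑ j ∈ Finset.univ.erase i, f j := by
            rw [hgdef, Finset.sum_update_of_mem (Finset.mem_univ i),
              Finset.sdiff_singleton_eq_erase]
          have h2 : s = f i + ∑ j ∈ Finset.univ.erase i, f j :=
            (Finset.add_sum_erase _ _ (Finset.mem_univ i)).symm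
          omega
        have hgprod : ∏ j, ((f j).factorial : ℚ)
            = ((f i : ℚ)) * ∏ j, ((g j).factorial : ℚ) := by
          rw [← Finset.mul_prod_erase _ (fun j => ((f j).factorial : ℚ)) (Finset.mem_univ i),
              ← Finset.mul_prod_erase _ (fun j => ((g j).factorial : ℚ)) (Finset.mem_univ i)]
          have : ∏ j ∈ Finset.univ.erase i, ((g j).factorial : ℚ)
              = ∏ j ∈ Finset.univ.erase i, ((f j).factorial : ℚ) :=
            Finset.prod_congr rfl fun j hj => by
              rw [hgdef, Function.update_of_ne (Finset.ne_of_mem_erase hj)]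
          rw [this, hgdef, Function.update_self, hc]
          push_cast [Nat.factorial_succ]
          ring
        have hmg := multinomial_cast_eq Finset.univ g
        rw [hgsum] at hmg
        rw [hgprod, ← mul_assoc, mul_comm ((Nat.multinomial Finset.univ g : ℚ)) ((f i : ℚ)),
            mul_assoc, hmg]
    have lhs : (intMultinomial v : ℚ) * ∏ j, ((f j).factorial : ℚ) = (s.factorial : ℚ) := by
      rw [intMultinomial_of_nonneg hpos]
      exact multinomial_cast_eq Finset.univ f
    have rhs : (∑ i, (intMultinomial (fun j => v j - if j = i then 1 else 0) : ℚ))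
        * ∏ j, ((f j).factorial : ℚ) = (s.factorial : ℚ) := by
      rw [Finset.sum_mul]
      rw [Finset.sum_congr rfl fun i _ => claim i, ← Finset.sum_mul, ← Nat.cast_sum, ← hs, ht]
      push_cast [Nat.factorial_succ]
      ring
    exact mul_right_cancel₀ hprodne (lhs.trans rhs.symm)
  · push_neg at hpos
    obtain ⟨i0, hi0⟩ := hpos
    rw [intMultinomial_neg i0 hi0]
    rw [Finset.sum_congr rfl fun i _ => by
      rw [intMultinomial_neg i0 (by split <;> omega)]]
    simp
end

noncomputable section
lemma intMultinomial_index_mul {d : ℕ} (v : Fin d → ℤ) (i : Fin d) :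
    ((v i : ℤ) : ℚ) * (intMultinomial v : ℚ)
      = ((∑ j, v j : ℤ) : ℚ)
        * (intMultinomial (fun j => v j - if j = i then 1 else 0) : ℚ) := by
  by_cases hpos : ∀ j, 0 ≤ v j
  · set f : Fin d → ℕ := fun j => (v j).toNat with hf
    have hvf : ∀ j, v j = (f j : ℤ) := fun j => (Int.toNat_of_nonneg (hpos j)).symm
    by_cases hfi : f i = 0
    · have h1 : v i = 0 := by rw [hvf i, hfi]; rfl
      rw [h1, intMultinomial_neg (v := fun j => v j - if j = i then 1 else 0) i
        (by show v i - (if i = i then 1 else 0) < 0; rw [if_pos rfl, h1]; norm_num)]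
      simp
    · obtain ⟨c, hc⟩ : ∃ c, f i = c + 1 := ⟨f i - 1, by omega⟩
      have hwpos : ∀ j, 0 ≤ v j - if j = i then 1 else 0 := by
        intro j
        by_cases hj : j = i
        · subst hj; rw [if_pos rfl, hvf j, hc]; push_cast; omega
        · rw [if_neg hj]; simpa using hpos j
      have hg : (fun j => (v j - if j = i then 1 else 0).toNat) = Function.update f i c := by
        funext j
        by_cases hj : j = i
        · subst hj; rw [Function.update_self, if_pos rfl, hvf j, hc]; push_cast; omega
        · rw [Function.update_of_ne hj, if_neg hj, hvf j]; push_cast; omega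
      rw [intMultinomial_of_nonneg hpos, intMultinomial_of_nonneg hwpos, hg]
      have hff : (fun j => (v j).toNat) = f := rfl
      rw [hff]
      set g := Function.update f i c with hgdef
      have hsum : ∑ j, v j = ((∑ j, f j : ℕ) : ℤ) := by
        push_cast; exact Finset.sum_congr rfl fun j _ => hvf j
      set s := ∑ j, f j with hs
      have hfis : f i ≤ s :=
        Finset.single_le_sum (fun _ _ => Nat.zero_le _) (Finset.mem_univ i)
      obtain ⟨t, ht⟩ : ∃ t, s = t + 1 := ⟨s - 1, by omega⟩
      have hgsum : ∑ j, g j = t := by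
        have h1 : ∑ j, g j = c + ∑ j ∈ Finset.univ \ {i}, f j := by
          rw [hgdef, Finset.sum_update_of_mem (Finset.mem_univ i)]
        have h2 : s = f i + ∑ j ∈ Finset.univ \ {i}, f j := by
          rw [hs, Finset.sdiff_singleton_eq_erase,
            Finset.add_sum_erase _ _ (Finset.mem_univ i)]
        omega
      have hprodne : (∏ j, ((f j).factorial : ℚ)) ≠ 0 :=
        Finset.prod_ne_zero_iff.2 fun j _ => Nat.cast_ne_zero.2 (Nat.factorial_ne_zero _)
      have hgprod : ∏ j, ((f j).factorial : ℚ)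
          = ((f i : ℚ)) * ∏ j, ((g j).factorial : ℚ) := by
        rw [← Finset.mul_prod_erase _ (fun j => ((f j).factorial : ℚ)) (Finset.mem_univ i),
            ← Finset.mul_prod_erase _ (fun j => ((g j).factorial : ℚ)) (Finset.mem_univ i)]
        have : ∏ j ∈ Finset.univ.erase i, ((g j).factorial : ℚ)
            = ∏ j ∈ Finset.univ.erase i, ((f j).factorial : ℚ) :=
          Finset.prod_congr rfl fun j hj => by
            rw [hgdef, Function.update_of_ne (Finset.ne_of_mem_erase hj)]
        rw [this, hgdef, Function.update_self, hc]
        push_cast [Nat.factorial_succ]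
        ring
      rw [hvf i, hsum]
      push_cast
      apply mul_right_cancel₀ hprodne
      have hmf := multinomial_cast_eq Finset.univ f
      have hmg := multinomial_cast_eq Finset.univ g
      rw [hgsum] at hmg
      rw [← hs] at hmf
      calc (f i : ℚ) * (Nat.multinomial Finset.univ f : ℚ) * ∏ j, ((f j).factorial : ℚ)
          = (f i : ℚ) * (s.factorial : ℚ) := by rw [mul_assoc, hmf]
        _ = (f i : ℚ) * ((s : ℚ) * (t.factorial : ℚ)) := by
            rw [ht]; push_cast [Nat.factorial_succ]; ring
        _ = (s : ℚ) * (Nat.multinomial Finset.univ g : ℚ) * ∏ j, ((f j).factorial : ℚ) := by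
            rw [hgprod, show (s:ℚ) * (Nat.multinomial Finset.univ g : ℚ)
              * ((f i : ℚ) * ∏ j, ((g j).factorial : ℚ))
              = (f i : ℚ) * ((s:ℚ) * ((Nat.multinomial Finset.univ g : ℚ)
                * ∏ j, ((g j).factorial : ℚ))) from by ring, hmg]
  · push_neg at hpos
    obtain ⟨j0, hj0⟩ := hpos
    have hij : j0 ≠ i ∨ j0 = i := (ne_or_eq j0 i)
    rw [intMultinomial_neg j0 hj0,
      intMultinomial_neg (v := fun j => v j - if j = i then 1 else 0) j0
        (by show v j0 - (if j0 = i then 1 else 0) < 0; split <;> omega)]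
    simp
end

noncomputable section
lemma intMultinomial_split {d : ℕ} (v : Fin d → ℤ) (i : Fin d) (hi : 0 ≤ v i)
    (hs : 0 ≤ ∑ j, v j) :
    (intMultinomial v : ℚ)
      = (((∑ j, v j).toNat.choose ((v i).toNat)) : ℚ)
        * (intMultinomial (Function.update v i 0) : ℚ) := by
  by_cases hpos : ∀ j, 0 ≤ v j
  · have hupos : ∀ j, 0 ≤ Function.update v i 0 j := by
      intro j
      by_cases hj : j = i
      · subst hj; rw [Function.update_self]
      · rw [Function.update_of_ne hj]; exact hpos j
    rw [intMultinomial_of_nonneg hpos, intMultinomial_of_nonneg hupos]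
    set f : Fin d → ℕ := fun j => (v j).toNat with hf
    have hvf : ∀ j, v j = (f j : ℤ) := fun j => (Int.toNat_of_nonneg (hpos j)).symm
    have hg : (fun j => (Function.update v i 0 j).toNat) = Function.update f i 0 := by
      funext j
      by_cases hj : j = i
      · subst hj; rw [Function.update_self, Function.update_self]; rfl
      · rw [Function.update_of_ne hj, Function.update_of_ne hj]
    rw [hg]
    have hsnat : (∑ j, v j).toNat = ∑ j, f j := by
      have : ∑ j, v j = ((∑ j, f j : ℕ) : ℤ) := by
        push_cast; exact Finset.sum_congr rfl fun j _ => hvf j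
      rw [this, Int.toNat_natCast]
    rw [hsnat]
    -- now a Nat statement cast to ℚ
    norm_cast
    -- multinomial univ f = (∑ f).choose (f i) * multinomial univ (update f i 0)
    have h1 := Nat.multinomial_insert (Finset.notMem_erase i (Finset.univ : Finset (Fin d))) f
    rw [Finset.insert_erase (Finset.mem_univ i)] at h1
    have h2 := Nat.multinomial_insert (Finset.notMem_erase i (Finset.univ : Finset (Fin d)))
      (Function.update f i 0)
    rw [Finset.insert_erase (Finset.mem_univ i), Function.update_self,
      Nat.choose_zero_right, one_mul,
      nat_multinomial_congr (s := Finset.univ.erase i) (f := Function.update f i 0) (g := f)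
        (fun j hj => Function.update_of_ne (Finset.ne_of_mem_erase hj) _ _)] at h2
    rw [h1, h2, Finset.add_sum_erase _ _ (Finset.mem_univ i)]
  · push_neg at hpos
    obtain ⟨j0, hj0⟩ := hpos
    have hji : j0 ≠ i := fun h => absurd (h ▸ hj0) (not_lt.2 hi)
    rw [intMultinomial_neg j0 hj0,
      intMultinomial_neg (v := Function.update v i 0) j0
        (by rw [Function.update_of_ne hji]; exact hj0)]
    simp
end

noncomputable section
def KS (d : ℕ) (S : Finset (Fin d)) (n : ℕ) : Finset (Fin d → ℕ) :=
  (Fintype.piFinset fun _ : Fin d => Finset.range (n + 1)).filter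
    (fun k => (∀ i ∉ S, k i = 0) ∧ ∑ i, k i = n)

lemma mem_KS {d : ℕ} {S : Finset (Fin d)} {n : ℕ} {k : Fin d → ℕ} :
    k ∈ KS d S n ↔ (∀ i ∉ S, k i = 0) ∧ ∑ i, k i = n := by
  constructor
  · intro h; exact (Finset.mem_filter.1 h).2
  · intro h
    obtain ⟨h0, hsum⟩ := h
    refine Finset.mem_filter.2 ⟨Fintype.mem_piFinset.2 fun i => Finset.mem_range.2 ?_, h0, hsum⟩
    have h1 : k i ≤ ∑ j, k j :=
      Finset.single_le_sum (fun _ _ => Nat.zero_le _) (Finset.mem_univ i)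
    omega

def AS (d : ℕ) (S : Finset (Fin d)) (e : Fin d → ℤ) (p : MvPolynomial (Fin d) ℚ) (n : ℕ) : ℚ :=
  ∑ k ∈ KS d S n, MvPolynomial.eval (fun i => (k i : ℚ)) p
    * (intMultinomial (fun i => (k i : ℤ) + e i) : ℚ)

lemma AS_rec {d : ℕ} (S : Finset (Fin d)) (e : Fin d → ℤ) (he : ∀ i ∉ S, e i = 0) (c : ℚ)
    (n : ℕ) (hn : 1 ≤ n) (hne : (n : ℤ) + ∑ i, e i ≠ 0) :
    AS d S e (MvPolynomial.C c) n
      = S.card * AS d S e (MvPolynomial.C c) (n - 1)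
        + ∑ i ∈ S, AS d (S.erase i) (fun j => e j - if j = i then 1 else 0)
            (MvPolynomial.C c) n := by
  classical
  have step12 : AS d S e (MvPolynomial.C c) n
      = ∑ k ∈ KS d S n, ∑ i : Fin d,
          c * (intMultinomial (fun j => ((k j : ℤ) + e j) - if j = i then 1 else 0) : ℚ) := by
    unfold AS
    refine Finset.sum_congr rfl fun k hk => ?_
    rw [MvPolynomial.eval_C]
    rw [intMultinomial_pascal (v := fun i => (k i : ℤ) + e i) ?hv]
    · rw [Finset.mul_sum]
    case hv =>
      have hsum : ∑ j, k j = n := (mem_KS.1 hk).2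
      have : ∑ i, ((k i : ℤ) + e i) = (n : ℤ) + ∑ i, e i := by
        rw [Finset.sum_add_distrib]
        congr 1
        rw [← hsum]; push_cast; rfl
      rw [this]; exact hne
  rw [step12, Finset.sum_comm]
  rw [← Finset.sum_subset (Finset.subset_univ S) (fun i _ hiS => ?_)]
  swap
  · -- terms with i ∉ S vanish
    refine Finset.sum_eq_zero fun k hk => ?_
    have hki : k i = 0 := (mem_KS.1 hk).1 i hiS
    rw [intMultinomial_neg (v := fun j => ((k j : ℤ) + e j) - if j = i then 1 else 0) i
      (by show ((k i : ℤ) + e i) - (if i = i then 1 else 0) < 0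
          rw [if_pos rfl, hki, he i hiS]; norm_num)]
    simp
  have step5 : ∀ i ∈ S, (∑ k ∈ KS d S n,
      c * (intMultinomial (fun j => ((k j : ℤ) + e j) - if j = i then 1 else 0) : ℚ))
      = AS d S e (MvPolynomial.C c) (n - 1)
        + AS d (S.erase i) (fun j => e j - if j = i then 1 else 0) (MvPolynomial.C c) n := by
    intro i hiS
    have hBpart : ∑ k ∈ (KS d S n).filter (fun k => k i = 0),
        c * (intMultinomial (fun j => ((k j : ℤ) + e j) - if j = i then 1 else 0) : ℚ)
        = AS d (S.erase i) (fun j => e j - if j = i then 1 else 0) (MvPolynomial.C c) n := by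
      have hset : (KS d S n).filter (fun k => k i = 0) = KS d (S.erase i) n := by
        ext k
        simp only [Finset.mem_filter, mem_KS]
        constructor
        · rintro ⟨⟨h0, hsum⟩, hki⟩
          refine ⟨fun j hj => ?_, hsum⟩
          by_cases hji : j = i
          · rw [hji]; exact hki
          · exact h0 j (fun hjS => hj (Finset.mem_erase.2 ⟨hji, hjS⟩))
        · rintro ⟨h0, hsum⟩
          have hki : k i = 0 := h0 i (fun hmem => (Finset.mem_erase.1 hmem).1 rfl)
          exact ⟨⟨fun j hj => h0 j (fun hmem => hj (Finset.mem_of_mem_erase hmem)), hsum⟩, hki⟩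
      rw [hset]
      unfold AS
      refine Finset.sum_congr rfl fun k hk => ?_
      rw [MvPolynomial.eval_C]
      have harg : (fun j => ((k j : ℤ) + (e j - if j = i then 1 else 0)))
          = (fun j => ((k j : ℤ) + e j) - if j = i then 1 else 0) := by
        funext j; ring
      rw [harg]
    have hApart : ∑ k ∈ (KS d S n).filter (fun k => ¬ k i = 0),
        c * (intMultinomial (fun j => ((k j : ℤ) + e j) - if j = i then 1 else 0) : ℚ)
        = AS d S e (MvPolynomial.C c) (n - 1) := by
      unfold AS
      refine Finset.sum_bij' (i := fun k _ => fun j => k j - if j = i then 1 else 0)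
        (j := fun k _ => fun j => k j + if j = i then 1 else 0) ?_ ?_ ?_ ?_ ?_
      · intro k hk
        simp only [Finset.mem_filter] at hk
        obtain ⟨hk1, hki⟩ := hk
        obtain ⟨h0, hsum⟩ := mem_KS.1 hk1
        refine mem_KS.2 ⟨fun j hj => ?_, ?_⟩
        · have hji : j ≠ i := fun h => hj (h ▸ hiS)
          rw [if_neg hji, h0 j hj]
        · have hsplit : ∑ j, (k j - if j = i then 1 else 0)
              = (k i - 1) + ∑ j ∈ Finset.univ.erase i, k j := by
            rw [← Finset.add_sum_erase _ _ (Finset.mem_univ i), if_pos rfl]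
            congr 1
            exact Finset.sum_congr rfl fun j hj => by
              rw [if_neg (Finset.ne_of_mem_erase hj)]; omega
          have h2 := Finset.add_sum_erase Finset.univ k (Finset.mem_univ i)
          omega
      · intro k hk
        obtain ⟨h0, hsum⟩ := mem_KS.1 hk
        refine Finset.mem_filter.2 ⟨mem_KS.2 ⟨fun j hj => ?_, ?_⟩, ?_⟩
        · have hji : j ≠ i := fun h => hj (h ▸ hiS)
          rw [if_neg hji, h0 j hj]
        · have hsplit : ∑ j, (k j + if j = i then 1 else 0)
              = (k i + 1) + ∑ j ∈ Finset.univ.erase i, k j := by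
            rw [← Finset.add_sum_erase _ _ (Finset.mem_univ i), if_pos rfl]
            congr 1
            exact Finset.sum_congr rfl fun j hj => by
              rw [if_neg (Finset.ne_of_mem_erase hj)]; omega
          have h2 := Finset.add_sum_erase Finset.univ k (Finset.mem_univ i)
          omega
        · dsimp only
          rw [if_pos rfl]; omega
      · intro k hk
        simp only [Finset.mem_filter] at hk
        funext j
        by_cases hj : j = i
        · subst hj; dsimp only; rw [if_pos rfl]
          have : ¬ k j = 0 := hk.2
          omega
        · dsimp only; rw [if_neg hj]; omega
      · intro k hk
        funext j
        by_cases hj : j = i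
        · subst hj; dsimp only; rw [if_pos rfl]; omega
        · dsimp only; rw [if_neg hj]; omega
      · intro k hk
        simp only [Finset.mem_filter] at hk
        obtain ⟨hk1, hki⟩ := hk
        rw [MvPolynomial.eval_C]
        congr 1
        have harg : (fun j => (((k j - if j = i then 1 else 0 : ℕ)) : ℤ) + e j)
            = (fun j => ((k j : ℤ) + e j) - if j = i then 1 else 0) := by
          funext j
          by_cases hj : j = i
          · subst hj
            rw [if_pos rfl, if_pos rfl, Nat.cast_sub (by omega)]
            push_cast; ring
          · rw [if_neg hj, if_neg hj, Nat.sub_zero]; push_cast; ring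
        rw [harg]
    rw [← Finset.sum_filter_add_sum_filter_not (KS d S n) (fun k => k i = 0), hBpart, hApart]
    ring
  rw [Finset.sum_congr rfl step5, Finset.sum_add_distrib, Finset.sum_const, nsmul_eq_mul]
end

noncomputable section

lemma sum_shift {d : ℕ} (k : Fin d → ℕ) (e : Fin d → ℤ) {n : ℕ} (hsum : ∑ i, k i = n) :
    ∑ i, ((k i : ℤ) + e i) = (n : ℤ) + ∑ i, e i := by
  rw [Finset.sum_add_distrib]
  congr 1
  rw [← hsum]; push_cast; rfl

lemma AS_zero_of_neg_sum {d : ℕ} (S : Finset (Fin d)) (e : Fin d → ℤ)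
    (p : MvPolynomial (Fin d) ℚ) (n : ℕ) (h : (n : ℤ) + ∑ i, e i < 0) :
    AS d S e p n = 0 := by
  unfold AS
  refine Finset.sum_eq_zero fun k hk => ?_
  rw [intMultinomial_sum_neg (by rw [sum_shift k e (mem_KS.1 hk).2]; exact h)]
  simp

lemma AS_mul_X {d : ℕ} (S : Finset (Fin d)) (e : Fin d → ℤ) (p : MvPolynomial (Fin d) ℚ)
    (i : Fin d) (n : ℕ) :
    AS d S e (p * MvPolynomial.X i) n
      = ((n : ℚ) + ((∑ j, e j : ℤ) : ℚ))
          * AS d S (fun j => e j - if j = i then 1 else 0) p n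
        - ((e i : ℤ) : ℚ) * AS d S e p n := by
  unfold AS
  rw [Finset.mul_sum, Finset.mul_sum, ← Finset.sum_sub_distrib]
  refine Finset.sum_congr rfl fun k hk => ?_
  obtain ⟨h0, hsum⟩ := mem_KS.1 hk
  rw [map_mul, MvPolynomial.eval_X]
  have hkey := intMultinomial_index_mul (fun j => (k j : ℤ) + e j) i
  rw [sum_shift k e hsum] at hkey
  have harg : (fun j => ((k j : ℤ) + (e j - if j = i then 1 else 0)))
      = (fun j => ((k j : ℤ) + e j) - if j = i then 1 else 0) := by
    funext j; ring
  rw [harg]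
  have hki : ((k i : ℤ) : ℚ) = (((k i : ℤ) + e i : ℤ) : ℚ) - ((e i : ℤ) : ℚ) := by
    push_cast; ring
  push_cast at hkey ⊢
  linear_combination (MvPolynomial.eval (fun i => ((k i : ℕ) : ℚ)) p) * hkey

lemma AS_redOne_claim {d : ℕ} (S : Finset (Fin d)) (e : Fin d → ℤ)
    (p : MvPolynomial (Fin d) ℚ) (i : Fin d) (hi : i ∉ S) (hei : 0 ≤ e i) (n : ℕ) :
    AS d S e p n
      = ((Polynomial.C (((e i).toNat.factorial : ℚ))⁻¹
          * ((descPochhammer ℚ (e i).toNat).comp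
              (Polynomial.X + Polynomial.C ((∑ j, e j : ℤ) : ℚ)))).eval (n : ℚ))
        * AS d S (Function.update e i 0) p n := by
  have hsumup : ∑ j, Function.update e i 0 j = (∑ j, e j) - e i := by
    rw [Finset.sum_update_of_mem (Finset.mem_univ i), Finset.sdiff_singleton_eq_erase]
    have := Finset.add_sum_erase Finset.univ e (Finset.mem_univ i)
    omega
  by_cases hneg : (n : ℤ) + ∑ j, e j < 0
  · rw [AS_zero_of_neg_sum _ _ _ _ hneg, AS_zero_of_neg_sum _ _ _ _ (by rw [hsumup]; omega)]
    ring
  · push_neg at hneg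
    set c := (e i).toNat with hc
    set M := ((n : ℤ) + ∑ j, e j).toNat with hM
    have hMcast : ((M : ℤ)) = (n : ℤ) + ∑ j, e j := Int.toNat_of_nonneg hneg
    have qval : ((Polynomial.C ((c.factorial : ℚ))⁻¹
          * ((descPochhammer ℚ c).comp
              (Polynomial.X + Polynomial.C ((∑ j, e j : ℤ) : ℚ)))).eval (n : ℚ))
        = (M.choose c : ℚ) := by
      rw [Polynomial.eval_mul, Polynomial.eval_C, Polynomial.eval_comp, Polynomial.eval_add,
        Polynomial.eval_X, Polynomial.eval_C]
      have hcast : ((n : ℚ) + ((∑ j, e j : ℤ) : ℚ)) = ((M : ℕ) : ℚ) := by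
        have : ((M : ℤ) : ℚ) = ((n : ℤ) : ℚ) + ((∑ j, e j : ℤ) : ℚ) := by
          rw [hMcast]; push_cast; ring
        push_cast at this ⊢
        linarith
      rw [hcast, descPochhammer_eval_eq_descFactorial ℚ M c,
        Nat.descFactorial_eq_factorial_mul_choose]
      push_cast
      rw [← mul_assoc, inv_mul_cancel₀ (Nat.cast_ne_zero.2 (Nat.factorial_ne_zero c)), one_mul]
    rw [qval]
    unfold AS
    rw [Finset.mul_sum]
    refine Finset.sum_congr rfl fun k hk => ?_
    obtain ⟨h0, hsum⟩ := mem_KS.1 hk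
    have hki : k i = 0 := h0 i hi
    have hsplit := intMultinomial_split (fun j => (k j : ℤ) + e j) i
      (by rw [hki]; simpa using hei)
      (by rw [sum_shift k e hsum]; exact hneg)
    rw [sum_shift k e hsum] at hsplit
    have h1 : ((fun j => (k j : ℤ) + e j) i).toNat = c := by
      dsimp only; rw [hki, hc]; norm_num
    have h2 : Function.update (fun j => (k j : ℤ) + e j) i 0
        = fun j => (k j : ℤ) + Function.update e i 0 j := by
      funext j
      by_cases hj : j = i
      · subst hj; rw [Function.update_self, Function.update_self, hki]; norm_num
      · rw [Function.update_of_ne hj, Function.update_of_ne hj]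
    rw [h1, h2] at hsplit
    rw [hsplit]
    ring
end

noncomputable section
-- reduction to normalized e
lemma AS_redOne {d : ℕ} (S : Finset (Fin d)) (e : Fin d → ℤ) (p : MvPolynomial (Fin d) ℚ)
    (i : Fin d) (hi : i ∉ S)
    (h : Nice S.card (PowerSeries.mk (AS d S (Function.update e i 0) p))) :
    Nice S.card (PowerSeries.mk (AS d S e p)) := by
  rcases lt_or_ge (e i) 0 with hei | hei
  · have hz : ∀ n, AS d S e p n = 0 := by
      intro n
      refine Finset.sum_eq_zero fun k hk => ?_
      have hki : k i = 0 := (mem_KS.1 hk).1 i hi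
      rw [intMultinomial_neg (v := fun j => (k j : ℤ) + e j) i
        (by show (k i : ℤ) + e i < 0; rw [hki]; simpa using hei)]
      simp
    have hz2 : PowerSeries.mk (AS d S e p) = 0 := by
      ext n; rw [PowerSeries.coeff_mk, hz n, map_zero]
    rw [hz2]; exact nice_zero _
  · have heq : PowerSeries.mk (AS d S e p)
        = PowerSeries.mk (fun n =>
            ((Polynomial.C (((e i).toNat.factorial : ℚ))⁻¹
              * ((descPochhammer ℚ (e i).toNat).comp
                  (Polynomial.X + Polynomial.C ((∑ j, e j : ℤ) : ℚ)))).eval (n : ℚ))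
            * PowerSeries.coeff n (PowerSeries.mk (AS d S (Function.update e i 0) p))) := by
      ext n
      rw [PowerSeries.coeff_mk, PowerSeries.coeff_mk, PowerSeries.coeff_mk,
        AS_redOne_claim S e p i hi hei n]
    rw [heq]
    exact nice_mul_poly _ h

lemma AS_red {d : ℕ} (S : Finset (Fin d)) (p : MvPolynomial (Fin d) ℚ)
    (hnorm : ∀ (e : Fin d → ℤ), (∀ i ∉ S, e i = 0) →
      Nice S.card (PowerSeries.mk (AS d S e p))) :
    ∀ (e : Fin d → ℤ), Nice S.card (PowerSeries.mk (AS d S e p)) := by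
  classical
  have key : ∀ (b : ℕ) (e : Fin d → ℤ),
      (Finset.univ.filter (fun i => i ∉ S ∧ e i ≠ 0)).card = b →
      Nice S.card (PowerSeries.mk (AS d S e p)) := by
    intro b
    induction b with
    | zero =>
      intro e hb
      refine hnorm e (fun i hi => ?_)
      by_contra hne
      have hmem : i ∈ Finset.univ.filter (fun i => i ∉ S ∧ e i ≠ 0) := by
        simp [hi, hne]
      rw [Finset.card_eq_zero.1 hb] at hmem
      exact absurd hmem (Finset.notMem_empty i)
    | succ b IH =>
      intro e hb
      have hne : (Finset.univ.filter (fun i => i ∉ S ∧ e i ≠ 0)).Nonempty := by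
        rw [← Finset.card_pos, hb]; omega
      obtain ⟨i, hi⟩ := hne
      simp only [Finset.mem_filter, Finset.mem_univ, true_and] at hi
      obtain ⟨hiS, hie⟩ := hi
      refine AS_redOne S e p i hiS (IH (Function.update e i 0) ?_)
      have hset : Finset.univ.filter (fun j => j ∉ S ∧ Function.update e i 0 j ≠ 0)
          = (Finset.univ.filter (fun j => j ∉ S ∧ e j ≠ 0)).erase i := by
        ext j
        simp only [Finset.mem_filter, Finset.mem_univ, true_and, Finset.mem_erase]
        constructor
        · rintro ⟨hjS, hje⟩
          have hji : j ≠ i := by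
            intro h; subst h; rw [Function.update_self] at hje; exact hje rfl
          rw [Function.update_of_ne hji] at hje
          exact ⟨hji, hjS, hje⟩
        · rintro ⟨hji, hjS, hje⟩
          rw [Function.update_of_ne hji]
          exact ⟨hjS, hje⟩
      rw [hset, Finset.card_erase_of_mem (by simp [hiS, hie]), hb]
      omega
  intro e
  exact key _ e rfl

lemma nice_AS {d : ℕ} (S : Finset (Fin d)) :
    ∀ (e : Fin d → ℤ) (p : MvPolynomial (Fin d) ℚ),
      Nice S.card (PowerSeries.mk (AS d S e p)) := by
  classical
  induction S using Finset.strongInduction with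
  | _ S IH =>
    have constCase : ∀ (e₀ : Fin d → ℤ) (c : ℚ),
        Nice S.card (PowerSeries.mk (AS d S e₀ (MvPolynomial.C c))) := by
      intro e₀ c
      refine AS_red S (MvPolynomial.C c) (fun e he => ?_) e₀
      rcases Finset.eq_empty_or_nonempty S with hS | hS
      · subst hS
        refine nice_finite_support (N := 1) (fun n hn => ?_)
        rw [PowerSeries.coeff_mk]
        have hKS : KS d ∅ n = ∅ := by
          refine Finset.eq_empty_of_forall_notMem fun k hk => ?_
          obtain ⟨h0, hsum⟩ := mem_KS.1 hk
          rw [Finset.sum_congr rfl (fun i _ => h0 i (Finset.notMem_empty i)),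
            Finset.sum_const_zero] at hsum
          omega
        unfold AS
        rw [hKS, Finset.sum_empty]
      · have hσ : 1 ≤ S.card := Finset.card_pos.2 hS
        set F := PowerSeries.mk (AS d S e (MvPolynomial.C c)) with hF
        set U := ∑ i ∈ S, PowerSeries.mk
          (AS d (S.erase i) (fun j => e j - if j = i then 1 else 0) (MvPolynomial.C c)) with hU
        set N := max 1 ((- ∑ j, e j).toNat + 1) with hN
        have hE : ∀ n, N ≤ n →
            PowerSeries.coeff n (F - PowerSeries.C ((S.card : ℕ) : ℚ) * (PowerSeries.X * F) - U) = 0 := by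
          intro n hn
          obtain ⟨m, rfl⟩ : ∃ m, n = m + 1 := ⟨n - 1, by omega⟩
          have hUc : PowerSeries.coeff (m + 1) U
              = ∑ i ∈ S, AS d (S.erase i) (fun j => e j - if j = i then 1 else 0)
                  (MvPolynomial.C c) (m + 1) := by
            rw [hU, map_sum]
            exact Finset.sum_congr rfl fun i _ => PowerSeries.coeff_mk _ _
          rw [map_sub, map_sub, PowerSeries.coeff_C_mul, PowerSeries.coeff_succ_X_mul, hUc,
            hF, PowerSeries.coeff_mk, PowerSeries.coeff_mk]
          have hrec := AS_rec S e he c (m + 1) (by omega) (by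
            intro hcon
            have h1 : (- ∑ j, e j) = ((m + 1 : ℕ) : ℤ) := by omega
            have h2 : (- ∑ j, e j).toNat = m + 1 := by omega
            omega)
          rw [Nat.add_sub_cancel] at hrec
          rw [hrec]
          ring
        have hNice1 := nice_finite_support (D := S.card) hE
        have hNiceU : Nice S.card U := by
          refine nice_sum _ _ fun i hiS => ?_
          refine nice_mono (Finset.card_le_card (Finset.erase_subset i S)) ?_
          exact IH (S.erase i) (Finset.erase_ssubset hiS) _ _
        refine nice_unfactor (a := S.card - 1) (by omega) ?_
        have hcast : ((S.card - 1 + 1 : ℕ) : ℚ) = ((S.card : ℕ) : ℚ) := by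
          congr 1; omega
        have hfac : ((1 - Polynomial.C ((S.card - 1 + 1 : ℕ) : ℚ) * Polynomial.X
              : Polynomial ℚ) : PowerSeries ℚ) * F
            = (F - PowerSeries.C ((S.card : ℕ) : ℚ) * (PowerSeries.X * F) - U) + U := by
          rw [hcast]
          push_cast [Polynomial.coe_sub, Polynomial.coe_one, Polynomial.coe_mul,
            Polynomial.coe_C, Polynomial.coe_X]
          ring
        rw [hfac]
        exact nice_add hNice1 hNiceU
    intro e p
    induction p using MvPolynomial.induction_on generalizing e with
    | C c => exact constCase e c
    | add p q hp hq =>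
      have hsplit : PowerSeries.mk (AS d S e (p + q))
          = PowerSeries.mk (AS d S e p) + PowerSeries.mk (AS d S e q) := by
        ext n
        rw [map_add, PowerSeries.coeff_mk, PowerSeries.coeff_mk, PowerSeries.coeff_mk]
        unfold AS
        rw [← Finset.sum_add_distrib]
        exact Finset.sum_congr rfl fun k hk => by rw [map_add]; ring
      rw [hsplit]
      exact nice_add (hp e) (hq e)
    | mul_X p i hp =>
      have key : PowerSeries.mk (AS d S e (p * MvPolynomial.X i))
          = PowerSeries.mk (fun n =>
              ((Polynomial.X + Polynomial.C ((∑ j, e j : ℤ) : ℚ)).eval (n : ℚ))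
              * PowerSeries.coeff n (PowerSeries.mk
                  (AS d S (fun j => e j - if j = i then 1 else 0) p)))
            + ((Polynomial.C (-((e i : ℤ) : ℚ)) : Polynomial ℚ) : PowerSeries ℚ)
              * PowerSeries.mk (AS d S e p) := by
        ext n
        rw [map_add, PowerSeries.coeff_mk, PowerSeries.coeff_mk, Polynomial.coe_C,
          PowerSeries.coeff_C_mul, PowerSeries.coeff_mk, PowerSeries.coeff_mk,
          AS_mul_X S e p i n, Polynomial.eval_add, Polynomial.eval_X, Polynomial.eval_C]
        ring
      rw [key]
      exact nice_add (nice_mul_poly _ (hp _)) (nice_polymul _ (hp _))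
end


/-- For a positive integer `d`, `e ∈ ℤ^d` and a polynomial `p` in `d` variables over `ℚ`, the
series `∑_{k ∈ ℕ^d} p(k) C_{k+e} t^{|k|}` is a rational function of `t` with poles only at
`t = 1/a` for integers `1 ≤ a ≤ d`: multiplying it by suitable powers of the factors
`(1 − a t)`, `1 ≤ a ≤ d`, yields a polynomial. -/
theorem multinomial_generating_series_rational (d : ℕ) (hd : 0 < d) (e : Fin d → ℤ)
    (p : MvPolynomial (Fin d) ℚ) :
    ∃ (m : Fin d → ℕ) (P : Polynomial ℚ),
      (∏ a : Fin d, (1 - PowerSeries.C (((a : ℕ) + 1 : ℕ) : ℚ) * PowerSeries.X) ^ (m a)) *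
        (PowerSeries.mk fun n : ℕ =>
          ∑ k ∈ (Fintype.piFinset fun _ : Fin d => Finset.range (n + 1)).filter
              (fun k : Fin d → ℕ => ∑ i, k i = n),
            MvPolynomial.eval (fun i => (k i : ℚ)) p *
              (intMultinomial (fun i => (k i : ℤ) + e i) : ℚ)) = (P : PowerSeries ℚ) := by
  classical
  obtain ⟨m, P, h⟩ := nice_AS (d := d) Finset.univ e p
  refine ⟨fun a => m a, P, ?_⟩
  have hcard : (Finset.univ : Finset (Fin d)).card = d := by simp
  rw [hcard] at h
  have hmk : (PowerSeries.mk fun n : ℕ =>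
          ∑ k ∈ (Fintype.piFinset fun _ : Fin d => Finset.range (n + 1)).filter
              (fun k : Fin d → ℕ => ∑ i, k i = n),
            MvPolynomial.eval (fun i => (k i : ℚ)) p *
              (intMultinomial (fun i => (k i : ℤ) + e i) : ℚ))
      = PowerSeries.mk (AS d Finset.univ e p) := by
    ext n
    rw [PowerSeries.coeff_mk, PowerSeries.coeff_mk]
    unfold AS KS
    congr 1
    exact (Finset.filter_congr (fun k _ => by simp)).symm
  rw [hmk]
  have hden : (∏ a : Fin d,
        (1 - PowerSeries.C (((a : ℕ) + 1 : ℕ) : ℚ) * PowerSeries.X) ^ (m (a : ℕ)))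
      = ((niceDen d m : Polynomial ℚ) : PowerSeries ℚ) := by
    rw [niceDen, ← Polynomial.coeToPowerSeries.ringHom_apply, map_prod,
      ← Fin.prod_univ_eq_prod_range (fun a => Polynomial.coeToPowerSeries.ringHom
          ((1 - Polynomial.C ((a + 1 : ℕ) : ℚ) * Polynomial.X) ^ (m a)))]
    refine Finset.prod_congr rfl fun a _ => ?_
    rw [map_pow, map_sub, map_one, map_mul]
    simp only [Polynomial.coeToPowerSeries.ringHom_apply, Polynomial.coe_C, Polynomial.coe_X]
  rw [hden]
  exact h
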